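/- Define T on H ⊗ H by T(e_i ⊗ e_i) = e_i ⊗ e_i and T(e_j ⊗ e_i) = q·(e_i ⊗ e_j) for i ≠ j, with -1 < q < 1. Then T is self-adjoint, braided, and satisfies -1 < T ≤ 1 (its spectrum is contained in (-1, 1]); in particular ker(1 + T) = {0}. -/

import Mathlib

open scoped ComplexOrder

namespace Wick

/-- The operator `T_i = 1^{⊗(i-1)} ⊗ T ⊗ 1^{⊗(n-i-1)}` on `H^{⊗n}` (1-indexed, acting on
tensor factors `i` and `i+1`), where `H = ℂ^d` and `H^{⊗n}` is identified with
functions `(Fin n → Fin d) → ℂ` via the basis of elementary tensors. -/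
noncomputable def Ti (d n : ℕ) (T : Matrix (Fin d × Fin d) (Fin d × Fin d) ℂ) (i : ℕ) :
    Matrix (Fin n → Fin d) (Fin n → Fin d) ℂ :=
  if h : 1 ≤ i ∧ i < n then
    fun w w' =>
      T (w ⟨i - 1, by omega⟩, w ⟨i, h.2⟩) (w' ⟨i - 1, by omega⟩, w' ⟨i, h.2⟩) *
        ∏ j : Fin n, if (j : ℕ) = i - 1 ∨ (j : ℕ) = i then 1 else (if w j = w' j then 1 else 0)
  else 1

/-- The product `T_1 T_2 ⋯ T_k` on `H^{⊗n}`. -/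
noncomputable def prodT (d n : ℕ) (T : Matrix (Fin d × Fin d) (Fin d × Fin d) ℂ) (k : ℕ) :
    Matrix (Fin n → Fin d) (Fin n → Fin d) ℂ :=
  ((List.range k).map (fun j => Ti d n T (j + 1))).prod

/-- The reversed product `T_k T_{k-1} ⋯ T_1` on `H^{⊗n}`. -/
noncomputable def prodTrev (d n : ℕ) (T : Matrix (Fin d × Fin d) (Fin d × Fin d) ℂ) (k : ℕ) :
    Matrix (Fin n → Fin d) (Fin n → Fin d) ℂ :=
  ((List.range k).map (fun j => Ti d n T (k - j))).prod

/-- `R_n = 1 + T_1 + T_1 T_2 + ⋯ + T_1 T_2 ⋯ T_{n-1}` on `H^{⊗n}`. -/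
noncomputable def Rmat (d n : ℕ) (T : Matrix (Fin d × Fin d) (Fin d × Fin d) ℂ) :
    Matrix (Fin n → Fin d) (Fin n → Fin d) ℂ :=
  ∑ k ∈ Finset.range n, prodT d n T k

/-- `1 ⊗ A` on `H^{⊗(n+1)}`, for `A` an operator on `H^{⊗n}`. -/
noncomputable def oneTensor (d n : ℕ) (A : Matrix (Fin n → Fin d) (Fin n → Fin d) ℂ) :
    Matrix (Fin (n + 1) → Fin d) (Fin (n + 1) → Fin d) ℂ :=
  fun w w' => (if w 0 = w' 0 then 1 else 0) * A (fun j => w j.succ) (fun j => w' j.succ)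

/-- `A ⊗ 1` on `H^{⊗(n+1)}`, for `A` an operator on `H^{⊗n}`. -/
noncomputable def tensorOne (d n : ℕ) (A : Matrix (Fin n → Fin d) (Fin n → Fin d) ℂ) :
    Matrix (Fin (n + 1) → Fin d) (Fin (n + 1) → Fin d) ℂ :=
  fun w w' =>
    A (fun j => w j.castSucc) (fun j => w' j.castSucc) *
      (if w (Fin.last n) = w' (Fin.last n) then 1 else 0)

/-- The operators `P_n` on `H^{⊗n}`: `P_1 = 1`, `P_{n+1} = (1 ⊗ P_n) R_{n+1}`
(so `P_2 = R_2 = 1 + T`). -/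
noncomputable def Pmat (d : ℕ) (T : Matrix (Fin d × Fin d) (Fin d × Fin d) ℂ) :
    (n : ℕ) → Matrix (Fin n → Fin d) (Fin n → Fin d) ℂ
  | 0 => 1
  | n + 1 => oneTensor d n (Pmat d T n) * Rmat d (n + 1) T

/-- `U_n = (T_1 ⋯ T_n)(T_1 ⋯ T_{n-1}) ⋯ (T_1 T_2) T_1` on `H^{⊗m}`. -/
noncomputable def Umat (d m : ℕ) (T : Matrix (Fin d × Fin d) (Fin d × Fin d) ℂ) (n : ℕ) :
    Matrix (Fin m → Fin d) (Fin m → Fin d) ℂ :=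
  ((List.range n).map (fun j => prodT d m T (n - j))).prod

/-- The braid condition `T_1 T_2 T_1 = T_2 T_1 T_2` on `H^{⊗3}`. -/
def Braided (d : ℕ) (T : Matrix (Fin d × Fin d) (Fin d × Fin d) ℂ) : Prop :=
  Ti d 3 T 1 * Ti d 3 T 2 * Ti d 3 T 1 = Ti d 3 T 2 * Ti d 3 T 1 * Ti d 3 T 2

/-- Elementary tensor `X ⊗ Y ∈ H^{⊗(n+m)}`. -/
noncomputable def tensorVec {d n m : ℕ} (X : (Fin n → Fin d) → ℂ) (Y : (Fin m → Fin d) → ℂ) :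
    (Fin (n + m) → Fin d) → ℂ :=
  fun u => X (fun i => u (Fin.castAdd m i)) * Y (fun j => u (Fin.natAdd n j))


/-- The operator `T` on `H ⊗ H` with `T(e_i ⊗ e_i) = e_i ⊗ e_i` and
`T(e_j ⊗ e_i) = q (e_i ⊗ e_j)` for `i ≠ j`. -/
noncomputable def Tmix (d : ℕ) (q : ℝ) : Matrix (Fin d × Fin d) (Fin d × Fin d) ℂ :=
  fun p p' =>
    if p = p' ∧ p.1 = p.2 then 1
    else if p.1 = p'.2 ∧ p.2 = p'.1 ∧ p'.1 ≠ p'.2 then (q : ℂ) else 0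

end Wick

open Matrix in
private theorem Wick.smulHerm {n : Type*} [Fintype n] {M : Matrix n n ℂ} {c : ℂ}
    (hc : star c = c) (hM : M.IsHermitian) : (c • M).IsHermitian := by
  unfold Matrix.IsHermitian
  rw [conjTranspose_smul, hM.eq, hc]

open Matrix in
private theorem Wick.smulPSD {n : Type*} [Fintype n] {M : Matrix n n ℂ} {c : ℂ} (hc : 0 ≤ c)
    (hM : M.PosSemidef) : (c • M).PosSemidef := by
  have hcs : star c = c := by
    rw [Complex.star_def, Complex.conj_eq_iff_im]; exact ((Complex.le_def).mp hc).2.symm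
  refine PosSemidef.of_dotProduct_mulVec_nonneg (Wick.smulHerm hcs hM.isHermitian) fun x => ?_
  rw [smul_mulVec, dotProduct_smul, smul_eq_mul]
  exact mul_nonneg hc (hM.dotProduct_mulVec_nonneg x)

open Matrix in
private theorem Wick.smulPD {n : Type*} [Fintype n] [DecidableEq n] {c : ℂ} (hc : 0 < c) :
    (c • (1 : Matrix n n ℂ)).PosDef := by
  have hcs : star c = c := by
    rw [Complex.star_def, Complex.conj_eq_iff_im]; exact ((Complex.le_def).mp hc.le).2.symm
  refine PosDef.of_dotProduct_mulVec_pos (Wick.smulHerm hcs Matrix.isHermitian_one) fun x hx => ?_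
  rw [smul_mulVec, dotProduct_smul, smul_eq_mul, one_mulVec]
  exact mul_pos hc (Matrix.dotProduct_star_self_pos_iff.mpr hx)

open Matrix in
private theorem Wick.projPSD {n : Type*} [Fintype n] {M : Matrix n n ℂ} (h1 : M.IsHermitian)
    (h2 : M * M = M) : M.PosSemidef := by
  have h : M = Mᴴ * M := by rw [h1.eq, h2]
  rw [h]
  exact Matrix.posSemidef_conjTranspose_mul_self M

namespace Wick

/-- The swap operator on `H ⊗ H`. -/
noncomputable def Smat (d : ℕ) : Matrix (Fin d × Fin d) (Fin d × Fin d) ℂ :=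
  fun p p' => if p' = (p.2, p.1) then 1 else 0

/-- The projection onto the span of the `e_i ⊗ e_i`. -/
noncomputable def Dmat (d : ℕ) : Matrix (Fin d × Fin d) (Fin d × Fin d) ℂ :=
  Matrix.diagonal (fun p => if p.1 = p.2 then 1 else 0)

open Matrix

theorem Smat_mul_Smat (d : ℕ) : Smat d * Smat d = 1 := by
  ext p p'
  rw [Matrix.mul_apply]
  simp only [Smat, ite_mul, one_mul, zero_mul, Finset.sum_ite_eq' Finset.univ,
    Finset.mem_univ, if_true, Matrix.one_apply]
  obtain ⟨i, j⟩ := p; obtain ⟨k, l⟩ := p'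
  simp only [Prod.mk.injEq]
  by_cases h1 : i = k <;> by_cases h2 : j = l <;> simp_all [eq_comm]

theorem Smat_herm (d : ℕ) : (Smat d).IsHermitian := by
  ext ⟨i, j⟩ ⟨k, l⟩
  simp only [Smat, conjTranspose_apply, Prod.mk.injEq]
  by_cases h1 : i = l <;> by_cases h2 : j = k <;> simp_all [eq_comm]

theorem Dmat_herm (d : ℕ) : (Dmat d).IsHermitian := by
  refine Matrix.isHermitian_diagonal_iff.mpr fun p => ?_
  by_cases h : p.1 = p.2 <;> simp [_root_.IsSelfAdjoint, h]

theorem Dmat_mul_Dmat (d : ℕ) : Dmat d * Dmat d = Dmat d := by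
  have h : (fun p : Fin d × Fin d => (if p.1 = p.2 then (1:ℂ) else 0) *
      (if p.1 = p.2 then (1:ℂ) else 0)) = fun p => if p.1 = p.2 then (1:ℂ) else 0 := by
    funext p; by_cases h : p.1 = p.2 <;> simp [h]
  rw [Dmat, Matrix.diagonal_mul_diagonal, h]

theorem Smat_mul_Dmat (d : ℕ) : Smat d * Dmat d = Dmat d := by
  ext ⟨i, j⟩ ⟨k, l⟩
  rw [Dmat, Matrix.mul_diagonal]
  simp only [Smat, Matrix.diagonal_apply, Prod.mk.injEq, Prod.ext_iff, ite_mul, one_mul, zero_mul]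
  by_cases h1 : i = k <;> by_cases h2 : j = l <;> by_cases h3 : k = l <;>
    by_cases h4 : i = j <;> simp_all [eq_comm]

theorem Dmat_mul_Smat (d : ℕ) : Dmat d * Smat d = Dmat d := by
  ext ⟨i, j⟩ ⟨k, l⟩
  rw [Dmat, Matrix.diagonal_mul]
  simp only [Smat, Matrix.diagonal_apply, Prod.mk.injEq, Prod.ext_iff, mul_ite, mul_one, mul_zero]
  by_cases h1 : i = k <;> by_cases h2 : j = l <;> by_cases h3 : k = l <;>
    by_cases h4 : i = j <;> simp_all [eq_comm]

theorem Tmix_decomp (d : ℕ) (q : ℝ) :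
    Tmix d q = (q : ℂ) • Smat d + (1 - (q : ℂ)) • Dmat d := by
  ext ⟨i, j⟩ ⟨k, l⟩
  simp only [Tmix, Smat, Dmat, Matrix.add_apply, Matrix.smul_apply, Matrix.diagonal_apply,
    smul_eq_mul, Prod.mk.injEq, Prod.ext_iff, ne_eq]
  by_cases h1 : i = j <;> by_cases h2 : k = l <;> by_cases h3 : i = k <;> by_cases h4 : j = l <;>
    by_cases h5 : i = l <;> by_cases h6 : j = k <;> simp_all [eq_comm]

theorem Ti1_apply (d : ℕ) (T : Matrix (Fin d × Fin d) (Fin d × Fin d) ℂ) (w w' : Fin 3 → Fin d) :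
    Ti d 3 T 1 w w' = T (w 0, w 1) (w' 0, w' 1) * (if w 2 = w' 2 then 1 else 0) := by
  rw [Ti]; erw [dif_pos (by omega : 1 ≤ 1 ∧ 1 < 3)]
  norm_num [Fin.prod_univ_three]
  intro h; exact absurd h (by decide)

theorem Ti2_apply (d : ℕ) (T : Matrix (Fin d × Fin d) (Fin d × Fin d) ℂ) (w w' : Fin 3 → Fin d) :
    Ti d 3 T 2 w w' = T (w 1, w 2) (w' 1, w' 2) * (if w 0 = w' 0 then 1 else 0) := by
  rw [Ti]; erw [dif_pos (by omega : 1 ≤ 2 ∧ 2 < 3)]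
  have h2 : (⟨2, by omega⟩ : Fin 3) = 2 := rfl
  norm_num [Fin.prod_univ_three, h2]

/-- Matrix of the form "scalar times a point mass in each row". -/
noncomputable def pm {d : ℕ} (f : (Fin 3 → Fin d) → ℂ) (σ : (Fin 3 → Fin d) → (Fin 3 → Fin d)) :
    Matrix (Fin 3 → Fin d) (Fin 3 → Fin d) ℂ :=
  fun w w' => f w * if w' = σ w then 1 else 0

theorem pm_mul {d : ℕ} (f g : (Fin 3 → Fin d) → ℂ) (σ τ : (Fin 3 → Fin d) → (Fin 3 → Fin d)) :
    pm f σ * pm g τ = pm (fun w => f w * g (σ w)) (fun w => τ (σ w)) := by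
  ext w w'
  rw [Matrix.mul_apply, Finset.sum_eq_single (σ w)]
  · simp [pm, mul_assoc]
  · intro u _ hu
    simp [pm, hu]
  · intro h
    exact absurd (Finset.mem_univ _) h

theorem eq_vec3 {d : ℕ} (w' : Fin 3 → Fin d) (a b c : Fin d) :
    (w' = ![a, b, c]) ↔ (w' 0 = a ∧ w' 1 = b ∧ w' 2 = c) := by
  constructor
  · rintro rfl; simp
  · rintro ⟨h0, h1, h2⟩; funext j; fin_cases j <;> simpa

theorem Tmix_apply' (d : ℕ) (q : ℝ) (p p' : Fin d × Fin d) :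
    Tmix d q p p' = (if p.1 = p.2 then (1:ℂ) else (q:ℂ)) *
      ((if p'.1 = p.2 then (1:ℂ) else 0) * (if p'.2 = p.1 then (1:ℂ) else 0)) := by
  obtain ⟨i, j⟩ := p; obtain ⟨k, l⟩ := p'
  simp only [Tmix, Prod.mk.injEq, Prod.ext_iff, ne_eq]
  by_cases h1 : i = j <;> by_cases h2 : k = l <;> by_cases h3 : i = k <;> by_cases h4 : j = l <;>
    by_cases h5 : i = l <;> by_cases h6 : j = k <;> simp_all [eq_comm]

theorem Ti1_pm (d : ℕ) (q : ℝ) :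
    Ti d 3 (Tmix d q) 1 =
      pm (fun w => if w 0 = w 1 then (1:ℂ) else (q:ℂ)) (fun w => ![w 1, w 0, w 2]) := by
  ext w w'
  rw [Ti1_apply, Tmix_apply', pm]
  simp only [eq_vec3]
  by_cases h1 : w' 0 = w 1 <;> by_cases h2 : w' 1 = w 0 <;> by_cases h3 : w' 2 = w 2 <;>
    simp_all [eq_comm]

theorem Ti2_pm (d : ℕ) (q : ℝ) :
    Ti d 3 (Tmix d q) 2 =
      pm (fun w => if w 1 = w 2 then (1:ℂ) else (q:ℂ)) (fun w => ![w 0, w 2, w 1]) := by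
  ext w w'
  rw [Ti2_apply, Tmix_apply', pm]
  simp only [eq_vec3]
  by_cases h1 : w' 0 = w 0 <;> by_cases h2 : w' 1 = w 2 <;> by_cases h3 : w' 2 = w 1 <;>
    simp_all [eq_comm]

theorem Tmix_braided (d : ℕ) (q : ℝ) : Braided d (Tmix d q) := by
  unfold Braided
  rw [Ti1_pm, Ti2_pm, pm_mul, pm_mul, pm_mul, pm_mul]
  unfold pm
  funext w w'
  simp only [Matrix.cons_val_zero, Matrix.cons_val_one, Matrix.head_cons, Matrix.cons_val_two,
    Matrix.tail_cons]
  split_ifs <;> simp_all <;> ring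

end Wick


namespace Wick

/-- Define `T` on `H ⊗ H` by `T(e_i ⊗ e_i) = e_i ⊗ e_i` and
`T(e_j ⊗ e_i) = q (e_i ⊗ e_j)` for `i ≠ j`, with `-1 < q < 1`.  Then `T` is
self-adjoint, braided, and satisfies `-1 < T ≤ 1` (spectrum in `(-1, 1]`), i.e.
`1 + T` is positive definite and `1 - T` is positive semidefinite; in particular
`ker(1 + T) = {0}`. -/
theorem Tmix_selfAdjoint_braided_spectrum (d : ℕ) (q : ℝ) (hq0 : -1 < q) (hq1 : q < 1) :
    (Tmix d q).IsHermitian ∧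
      Braided d (Tmix d q) ∧
      (1 + Tmix d q).PosDef ∧
      ((1 : Matrix (Fin d × Fin d) (Fin d × Fin d) ℂ) - Tmix d q).PosSemidef ∧
      LinearMap.ker (1 + Tmix d q).mulVecLin = ⊥ := by
  have hS := Smat_mul_Smat d
  have hSh := Smat_herm d
  have hDh := Dmat_herm d
  have hDD := Dmat_mul_Dmat d
  have hSD := Smat_mul_Dmat d
  have hDS := Dmat_mul_Smat d
  have hT := Tmix_decomp d q
  have hhalf : star (2⁻¹ : ℂ) = 2⁻¹ := by simp
  have hqs : star ((q:ℂ)) = (q:ℂ) := by simp [Complex.star_def, Complex.conj_ofReal]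
  have h1mqs : star (1 - (q:ℂ)) = 1 - (q:ℂ) := by
    simp [Complex.star_def, map_sub, Complex.conj_ofReal]
  -- projections
  have hPp_h : ((2⁻¹:ℂ) • (1 + Smat d)).IsHermitian :=
    smulHerm hhalf (Matrix.isHermitian_one.add hSh)
  have hPm_h : ((2⁻¹:ℂ) • (1 - Smat d)).IsHermitian :=
    smulHerm hhalf (Matrix.isHermitian_one.sub hSh)
  have hE_h : ((2⁻¹:ℂ) • (1 + Smat d) - Dmat d).IsHermitian := hPp_h.sub hDh
  have hPp_idem : ((2⁻¹:ℂ) • (1 + Smat d)) * ((2⁻¹:ℂ) • (1 + Smat d)) =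
      (2⁻¹:ℂ) • (1 + Smat d) := by
    rw [smul_mul_assoc, mul_smul_comm, add_mul, one_mul, mul_add, mul_one, hS]
    match_scalars <;> ring
  have hPm_idem : ((2⁻¹:ℂ) • (1 - Smat d)) * ((2⁻¹:ℂ) • (1 - Smat d)) =
      (2⁻¹:ℂ) • (1 - Smat d) := by
    rw [smul_mul_assoc, mul_smul_comm, sub_mul, one_mul, mul_sub, mul_one, hS]
    match_scalars <;> ring
  have hE_idem : ((2⁻¹:ℂ) • (1 + Smat d) - Dmat d) * ((2⁻¹:ℂ) • (1 + Smat d) - Dmat d) =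
      (2⁻¹:ℂ) • (1 + Smat d) - Dmat d := by
    rw [sub_mul, mul_sub, mul_sub, smul_mul_assoc, mul_smul_comm, smul_mul_assoc, mul_smul_comm,
      add_mul, one_mul, mul_add, mul_one, hS, add_mul, one_mul, mul_add, mul_one, hSD, hDS, hDD]
    match_scalars <;> ring
  have hPp : ((2⁻¹:ℂ) • (1 + Smat d)).PosSemidef := projPSD hPp_h hPp_idem
  have hPm : ((2⁻¹:ℂ) • (1 - Smat d)).PosSemidef := projPSD hPm_h hPm_idem
  have hE : ((2⁻¹:ℂ) • (1 + Smat d) - Dmat d).PosSemidef := projPSD hE_h hE_idem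
  have hDpsd : (Dmat d).PosSemidef := projPSD hDh hDD
  -- scalar positivity facts
  have h1mq : (0:ℂ) < 1 - (q:ℂ) := by
    rw [show (1 - (q:ℂ)) = ((1 - q : ℝ) : ℂ) by push_cast; ring]
    exact Complex.zero_lt_real.mpr (by linarith)
  have h1pq : (0:ℂ) < 1 + (q:ℂ) := by
    rw [show (1 + (q:ℂ)) = ((1 + q : ℝ) : ℂ) by push_cast; ring]
    exact Complex.zero_lt_real.mpr (by linarith)
  -- positive definiteness of 1 + T
  have hPD : (1 + Tmix d q).PosDef := by
    rcases le_or_gt 0 q with hq | hq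
    · have h2q : (0:ℂ) ≤ (2:ℂ) * (q:ℂ) := by
        rw [show ((2:ℂ) * (q:ℂ)) = ((2 * q : ℝ) : ℂ) by push_cast; ring]
        exact Complex.zero_le_real.mpr (by linarith)
      have hdec : 1 + Tmix d q = (1 - (q:ℂ)) • 1 +
          ((2:ℂ) * (q:ℂ)) • ((2⁻¹:ℂ) • (1 + Smat d)) + (1 - (q:ℂ)) • Dmat d := by
        rw [hT]; match_scalars <;> ring
      rw [hdec]
      exact ((smulPD h1mq).add_posSemidef (smulPSD h2q hPp)).add_posSemidef
        (smulPSD h1mq.le hDpsd)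
    · have h2q : (0:ℂ) ≤ (-2:ℂ) * (q:ℂ) := by
        rw [show ((-2:ℂ) * (q:ℂ)) = ((-2 * q : ℝ) : ℂ) by push_cast; ring]
        exact Complex.zero_le_real.mpr (by linarith)
      have hdec : 1 + Tmix d q = (1 + (q:ℂ)) • 1 +
          ((-2:ℂ) * (q:ℂ)) • ((2⁻¹:ℂ) • (1 - Smat d)) + (1 - (q:ℂ)) • Dmat d := by
        rw [hT]; match_scalars <;> ring
      rw [hdec]
      exact ((smulPD h1pq).add_posSemidef (smulPSD h2q hPm)).add_posSemidef
        (smulPSD h1mq.le hDpsd)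
  refine ⟨?_, Tmix_braided d q, hPD, ?_, ?_⟩
  · rw [hT]
    exact (smulHerm hqs hSh).add (smulHerm h1mqs hDh)
  · have hdec : (1 : Matrix (Fin d × Fin d) (Fin d × Fin d) ℂ) - Tmix d q =
        (1 + (q:ℂ)) • ((2⁻¹:ℂ) • (1 - Smat d)) +
          (1 - (q:ℂ)) • ((2⁻¹:ℂ) • (1 + Smat d) - Dmat d) := by
      rw [hT]; match_scalars <;> ring
    rw [hdec]
    exact (smulPSD h1pq.le hPm).add (smulPSD h1mq.le hE)
  · rw [LinearMap.ker_eq_bot']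
    intro x hx
    by_contra hx0
    have h := hPD.dotProduct_mulVec_pos hx0
    rw [Matrix.mulVecLin_apply] at hx
    rw [hx, dotProduct_zero] at h
    exact lt_irrefl 0 h

end Wick
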